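/- If S is a locally maximal product-free set in a finite group G with S ∩ S⁻¹ = ∅, then |G| ≤ 4|S|² + 1. -/

import Mathlib

open scoped Pointwise

def productFree {G : Type*} [Group G] (S : Set G) : Prop :=
  ∀ a ∈ S, ∀ b ∈ S, a * b ∉ S

def locallyMaximalPF {G : Type*} [Group G] (S : Set G) : Prop :=
  productFree S ∧ ∀ T : Set G, productFree T → S ⊆ T → T = S

/-- Cover lemma: for locally maximal product-free `S`,
`G = S ∪ SS ∪ SS⁻¹ ∪ S⁻¹S ∪ √S`. -/
theorem cover_aux {G : Type*} [Group G] (S : Set G) (hne : S.Nonempty)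
    (h : locallyMaximalPF S) (x : G) :
    x ∈ S ∪ S * S ∪ S * S⁻¹ ∪ S⁻¹ * S ∪ {y : G | y * y ∈ S} := by
  by_contra hx
  simp only [Set.mem_union, Set.mem_setOf_eq, not_or] at hx
  obtain ⟨⟨⟨⟨hx1, hx2⟩, hx3⟩, hx4⟩, hx5⟩ := hx
  have h1S : (1 : G) ∉ S := fun h1 => h.1 1 h1 1 h1 (by simpa using h1)
  have hx1' : x ≠ 1 := by
    rintro rfl
    obtain ⟨t, ht⟩ := hne
    exact hx3 ⟨t, ht, t⁻¹, by simpa using ht, by simp⟩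
  have hpf : productFree (insert x S) := by
    rintro a (rfl | ha) b (rfl | hb) hc
    · rcases hc with hc | hc
      · exact hx1' (by simpa using mul_eq_left.mp hc)
      · exact hx5 hc
    · rcases hc with hc | hc
      · exact h1S (by simpa using mul_eq_left.mp hc ▸ hb)
      · exact hx3 ⟨a * b, hc, b⁻¹, by simpa using hb, by simp⟩
    · rcases hc with hc | hc
      · exact h1S (by simpa using mul_eq_right.mp hc ▸ ha)
      · exact hx4 ⟨a⁻¹, by simpa using ha, a * b, hc, by simp⟩
    · rcases hc with hc | hc
      · exact hx2 (hc ▸ ⟨a, ha, b, hb, rfl⟩)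
      · exact h.1 a ha b hb hc
  have := h.2 (insert x S) hpf (Set.subset_insert x S)
  exact hx1 (this ▸ Set.mem_insert x S)

set_option maxHeartbeats 1000000 in
theorem stmt4 {G : Type*} [Group G] [Fintype G] (S : Set G) (hne : S.Nonempty)
    (h : locallyMaximalPF S) (hdisj : S ∩ S⁻¹ = ∅) :
    Nat.card G ≤ 4 * S.ncard ^ 2 + 1 := by
  classical
  -- strengthened cover using `S ∩ S⁻¹ = ∅`
  have cover : ∀ x : G,
      x ∈ S ∪ S⁻¹ ∪ S * S ∪ S⁻¹ * S⁻¹ ∪ S * S⁻¹ ∪ S⁻¹ * S := by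
    intro x
    simp only [Set.mem_union]
    rcases cover_aux S hne h x with (((hx | hx) | hx) | hx) | hx
    · exact Or.inl (Or.inl (Or.inl (Or.inl (Or.inl hx))))
    · exact Or.inl (Or.inl (Or.inl (Or.inr hx)))
    · exact Or.inl (Or.inr hx)
    · exact Or.inr hx
    · -- `x * x ∈ S`; apply the cover to `x⁻¹`
      rcases cover_aux S hne h x⁻¹ with (((hy | hy) | hy) | hy) | hy
      · exact Or.inl (Or.inl (Or.inl (Or.inl (Or.inr (by simpa using hy)))))
      · obtain ⟨a, ha, b, hb, hab⟩ := hy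
        have hab' : a * b = x⁻¹ := hab
        refine Or.inl (Or.inl (Or.inr ⟨b⁻¹, by simpa using hb, a⁻¹, by simpa using ha, ?_⟩))
        show b⁻¹ * a⁻¹ = x
        rw [← mul_inv_rev, hab', inv_inv]
      · obtain ⟨a, ha, b, hb, hab⟩ := hy
        have hab' : a * b = x⁻¹ := hab
        refine Or.inl (Or.inr ⟨b⁻¹, ?_, a⁻¹, by simpa using ha, ?_⟩)
        · simpa using hb
        · show b⁻¹ * a⁻¹ = x
          rw [← mul_inv_rev, hab', inv_inv]
      · obtain ⟨a, ha, b, hb, hab⟩ := hy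
        have hab' : a * b = x⁻¹ := hab
        refine Or.inr ⟨b⁻¹, by simpa using hb, a⁻¹, ?_, ?_⟩
        · simpa using ha
        · show b⁻¹ * a⁻¹ = x
          rw [← mul_inv_rev, hab', inv_inv]
      · exfalso
        have : x * x ∈ S ∩ S⁻¹ := by
          refine ⟨hx, ?_⟩
          rw [Set.mem_inv, mul_inv_rev]
          exact hy
        simp [hdisj] at this
  -- move to finsets
  set s : Finset G := S.toFinset with hs
  have hsc : (↑s : Set G) = S := Set.coe_toFinset S
  set n : ℕ := s.card with hn
  have hncard : S.ncard = n := by rw [← hsc]; simp [Set.ncard_coe_finset, hn]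
  have hn1 : 1 ≤ n := Finset.card_pos.mpr (by rwa [← hsc, Finset.coe_nonempty] at hne)
  have hsub : (Finset.univ : Finset G) ⊆
      s ∪ s⁻¹ ∪ s * s ∪ s⁻¹ * s⁻¹ ∪ (s * s⁻¹).erase 1 ∪ (s⁻¹ * s).erase 1 ∪ {1} := by
    intro x _
    by_cases hx1 : x = 1
    · simp [hx1]
    have hc := cover x
    have hmem : x ∈ (↑(s ∪ s⁻¹ ∪ s * s ∪ s⁻¹ * s⁻¹ ∪ s * s⁻¹ ∪ s⁻¹ * s) : Set G) := by
      rw [show (↑(s ∪ s⁻¹ ∪ s * s ∪ s⁻¹ * s⁻¹ ∪ s * s⁻¹ ∪ s⁻¹ * s) : Set G)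
          = S ∪ S⁻¹ ∪ S * S ∪ S⁻¹ * S⁻¹ ∪ S * S⁻¹ ∪ S⁻¹ * S by
        simp [hsc, Set.union_assoc]]
      exact hc
    rw [Finset.mem_coe] at hmem
    simp only [Finset.mem_union] at hmem ⊢
    rcases hmem with ((((hm | hm) | hm) | hm) | hm) | hm
    · tauto
    · tauto
    · tauto
    · tauto
    · exact Or.inl (Or.inl (Or.inr (Finset.mem_erase.mpr ⟨hx1, hm⟩)))
    · exact Or.inl (Or.inr (Finset.mem_erase.mpr ⟨hx1, hm⟩))
  -- cardinality bounds
  have herase1 : ((s * s⁻¹).erase 1).card ≤ n * n - n := by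
    have hsub2 : (s * s⁻¹).erase 1 ⊆ s.offDiag.image (fun p => p.1 * p.2⁻¹) := by
      intro x hx
      obtain ⟨hx1, hx2⟩ := Finset.mem_erase.mp hx
      obtain ⟨a, ha, b, hb, hab⟩ := Finset.mem_mul.mp hx2
      obtain ⟨c, hc, hcb⟩ := Finset.mem_inv.mp hb
      refine Finset.mem_image.mpr ⟨(a, c), Finset.mem_offDiag.mpr ⟨ha, hc, ?_⟩, by
        simp [hcb, hab]⟩
      intro hac
      simp only at hac
      subst hac
      exact hx1 (by rw [← hab, ← hcb, mul_inv_cancel])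
    calc ((s * s⁻¹).erase 1).card ≤ (s.offDiag.image (fun p => p.1 * p.2⁻¹)).card :=
          Finset.card_le_card hsub2
      _ ≤ s.offDiag.card := Finset.card_image_le
      _ = n * n - n := Finset.offDiag_card s
  have herase2 : ((s⁻¹ * s).erase 1).card ≤ n * n - n := by
    have hsub2 : (s⁻¹ * s).erase 1 ⊆ s.offDiag.image (fun p => p.1⁻¹ * p.2) := by
      intro x hx
      obtain ⟨hx1, hx2⟩ := Finset.mem_erase.mp hx
      obtain ⟨a, ha, b, hb, hab⟩ := Finset.mem_mul.mp hx2
      obtain ⟨c, hc, hca⟩ := Finset.mem_inv.mp ha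
      refine Finset.mem_image.mpr ⟨(c, b), Finset.mem_offDiag.mpr ⟨hc, hb, ?_⟩, by
        simp [hca, hab]⟩
      intro hcb
      simp only at hcb
      subst hcb
      exact hx1 (by rw [← hab, ← hca, inv_mul_cancel])
    calc ((s⁻¹ * s).erase 1).card ≤ (s.offDiag.image (fun p => p.1⁻¹ * p.2)).card :=
          Finset.card_le_card hsub2
      _ ≤ s.offDiag.card := Finset.card_image_le
      _ = n * n - n := Finset.offDiag_card s
  have hmul1 : (s * s).card ≤ n * n := Finset.card_mul_le
  have hmul2 : (s⁻¹ * s⁻¹).card ≤ n * n := by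
    calc (s⁻¹ * s⁻¹).card ≤ s⁻¹.card * s⁻¹.card := Finset.card_mul_le
      _ = n * n := by rw [Finset.card_inv]
  have hinv : (s⁻¹).card = n := Finset.card_inv s
  have hbig : Fintype.card G ≤ n + n + n * n + n * n + (n * n - n) + (n * n - n) + 1 := by
    calc Fintype.card G = (Finset.univ : Finset G).card := rfl
      _ ≤ (s ∪ s⁻¹ ∪ s * s ∪ s⁻¹ * s⁻¹ ∪ (s * s⁻¹).erase 1 ∪ (s⁻¹ * s).erase 1
            ∪ {1}).card := Finset.card_le_card hsub
      _ ≤ (s ∪ s⁻¹ ∪ s * s ∪ s⁻¹ * s⁻¹ ∪ (s * s⁻¹).erase 1 ∪ (s⁻¹ * s).erase 1).card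
            + ({1} : Finset G).card := Finset.card_union_le _ _
      _ ≤ ((s ∪ s⁻¹ ∪ s * s ∪ s⁻¹ * s⁻¹ ∪ (s * s⁻¹).erase 1).card
            + ((s⁻¹ * s).erase 1).card) + 1 := by
            simp only [Finset.card_singleton]
            exact Nat.add_le_add_right (Finset.card_union_le _ _) 1
      _ ≤ (((s ∪ s⁻¹ ∪ s * s ∪ s⁻¹ * s⁻¹).card + ((s * s⁻¹).erase 1).card)
            + ((s⁻¹ * s).erase 1).card) + 1 := by
            gcongr
            exact Finset.card_union_le _ _
      _ ≤ ((((s ∪ s⁻¹ ∪ s * s).card + (s⁻¹ * s⁻¹).card) + ((s * s⁻¹).erase 1).card)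
            + ((s⁻¹ * s).erase 1).card) + 1 := by
            gcongr
            exact Finset.card_union_le _ _
      _ ≤ (((((s ∪ s⁻¹).card + (s * s).card) + (s⁻¹ * s⁻¹).card)
            + ((s * s⁻¹).erase 1).card) + ((s⁻¹ * s).erase 1).card) + 1 := by
            gcongr
            exact Finset.card_union_le _ _
      _ ≤ ((((s.card + s⁻¹.card + (s * s).card) + (s⁻¹ * s⁻¹).card)
            + ((s * s⁻¹).erase 1).card) + ((s⁻¹ * s).erase 1).card) + 1 := by
            gcongr
            exact Finset.card_union_le _ _
      _ ≤ n + n + n * n + n * n + (n * n - n) + (n * n - n) + 1 := by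
            rw [hinv]
            gcongr
  rw [Nat.card_eq_fintype_card, hncard]
  have hle : n ≤ n * n := Nat.le_mul_of_pos_left n hn1
  have hsq : n ^ 2 = n * n := sq n
  rw [hsq]
  set m := n * n
  omega
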